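/- Let n, m ≥ 2 and let T be a deterministic decision tree over Σ^M. For ℓ : [m] → [n] and an integer t ≥ 0, after the first t queries of T on input x^ℓ (freezing the counts once T has reached a leaf), say a column j ∈ [m] is compromised if a cell of column j with value 0 has been queried or more than n/2 cells of column j have been queried; let A_t(ℓ) be the number of compromised columns, B_t(ℓ) the number of queried cells lying outside compromised columns, and I_t(ℓ) = A_t(ℓ) + (2/n)·B_t(ℓ). Then for every t ≥ 0, E_ℓ[I_{t+1}(ℓ)] − E_ℓ[I_t(ℓ)] ≤ 4/n, where ℓ is uniform over all functions [m] → [n]. -/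

import Mathlib

open Classical
open scoped ENNReal

set_option maxHeartbeats 1000000

/-! ### Deterministic decision trees -/

inductive DTree (ι σ : Type) : Type
  | leaf (b : Bool) : DTree ι σ
  | node (v : ι) (child : σ → DTree ι σ) : DTree ι σ

namespace DTree

variable {ι σ : Type}

/-- The output of the decision tree on input `x`. -/
def eval (x : ι → σ) : DTree ι σ → Bool
  | leaf b => b
  | node v child => (child (x v)).eval x

/-- The list of variables queried by the decision tree on input `x`,
in the order they are queried. -/
def queryList (x : ι → σ) : DTree ι σ → List ι
  | leaf _ => []
  | node v child => v :: (child (x v)).queryList x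

/-- The cost of the decision tree on input `x`: the number of internal nodes visited. -/
def cost (T : DTree ι σ) (x : ι → σ) : ℕ := (T.queryList x).length

/-- `T` computes `f` if it outputs `f x` on every input `x`. -/
def Computes (T : DTree ι σ) (f : (ι → σ) → Bool) : Prop := ∀ x, T.eval x = f x

end DTree

/-- Deterministic query complexity. -/
noncomputable def detComplexity {ι σ : Type} (f : (ι → σ) → Bool) : ℕ :=
  sInf {d : ℕ | ∃ T : DTree ι σ, T.Computes f ∧ ∀ x, T.cost x ≤ d}

/-- Expected cost of a randomized decision tree (a distribution over deterministic
decision trees) on input `x`. -/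
noncomputable def expCost {ι σ : Type} (μ : PMF (DTree ι σ)) (x : ι → σ) : ℝ≥0∞ :=
  ∑' T : DTree ι σ, μ T * (T.cost x : ℝ≥0∞)

/-- Zero-error (Las Vegas) randomized query complexity. -/
noncomputable def R0query {ι σ : Type} (f : (ι → σ) → Bool) : ℝ≥0∞ :=
  ⨅ μ ∈ {μ : PMF (DTree ι σ) | ∀ T ∈ μ.support, T.Computes f},
    ⨆ x : ι → σ, expCost μ x

/-- One-sided error randomized query complexity. -/
noncomputable def R1query {ι σ : Type} (f : (ι → σ) → Bool) : ℝ≥0∞ :=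
  ⨅ μ ∈ {μ : PMF (DTree ι σ) |
      (∀ x, f x = false → ∀ T ∈ μ.support, T.eval x = false) ∧
      (∀ x, f x = true → 1 / 2 ≤ ∑' T : DTree ι σ, if T.eval x = true then μ T else 0)},
    ⨆ x : ι → σ, expCost μ x

/-- Bounded-error (Monte Carlo) randomized query complexity. -/
noncomputable def Rquery {ι σ : Type} (f : (ι → σ) → Bool) : ℝ≥0∞ :=
  ⨅ μ ∈ {μ : PMF (DTree ι σ) |
      ∀ x, 9 / 10 ≤ ∑' T : DTree ι σ, if T.eval x = f x then μ T else 0},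
    ⨆ x : ι → σ, expCost μ x
/-! ### Quantum query algorithms -/

/-- The standard quantum query oracle `O_x |j,p⟩|w⟩ = |j, p + x_j mod S⟩|w⟩`,
as a matrix. -/
noncomputable def qOracle {V ω : Type} [DecidableEq V] [DecidableEq ω] {S : ℕ}
    (x : V → Fin S) : Matrix (V × Fin S × ω) (V × Fin S × ω) ℂ :=
  fun r c => if r = (c.1, c.2.1 + x c.1, c.2.2) then 1 else 0

/-- A quantum query algorithm on inputs `x : V → Fin S`, making `queries` queries, with
workspace `Fin (W+1)`, alternating the unitaries `U 0, …, U queries` with the oracle,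
and measuring with the projector `P` at the end. -/
structure QAlg (V : Type) [Fintype V] [DecidableEq V] (S : ℕ) [NeZero S] where
  queries : ℕ
  W : ℕ
  init : V
  U : ℕ → Matrix (V × Fin S × Fin (W + 1)) (V × Fin S × Fin (W + 1)) ℂ
  hU : ∀ t, (U t).conjTranspose * U t = 1 ∧ U t * (U t).conjTranspose = 1
  P : Matrix (V × Fin S × Fin (W + 1)) (V × Fin S × Fin (W + 1)) ℂ
  hP : P.conjTranspose = P ∧ P * P = P

namespace QAlg

variable {V : Type} [Fintype V] [DecidableEq V] {S : ℕ} [NeZero S]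

/-- The state of the quantum algorithm after `t` steps on input `x`. -/
noncomputable def state (A : QAlg V S) (x : V → Fin S) :
    ℕ → (V × Fin S × Fin (A.W + 1) → ℂ)
  | 0 => (A.U 0).mulVec fun r => if r = (A.init, 0, 0) then 1 else 0
  | t + 1 => (A.U (t + 1)).mulVec ((qOracle x).mulVec (A.state x t))

/-- The probability that the algorithm accepts input `x`: `‖P |Ψ_x⟩‖²`. -/
noncomputable def acceptProb (A : QAlg V S) (x : V → Fin S) : ℝ :=
  ∑ r : V × Fin S × Fin (A.W + 1), Complex.normSq (A.P.mulVec (A.state x A.queries) r)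

end QAlg

/-- Bounded-error quantum query complexity (for functions over a finite input
alphabet `σ`, identified with `Fin (card σ)` via a fixed bijection). -/
noncomputable def Qquery {V σ : Type} [Fintype V] [DecidableEq V] [Fintype σ] [Nonempty σ]
    (f : (V → σ) → Bool) : ℕ :=
  letI : NeZero (Fintype.card σ) := ⟨Fintype.card_ne_zero⟩
  sInf {t : ℕ | ∃ A : QAlg V (Fintype.card σ), A.queries = t ∧
    ∀ x : V → σ,
      (f x = true → 9 / 10 ≤ A.acceptProb fun j => Fintype.equivFin σ (x j)) ∧
      (f x = false → A.acceptProb (fun j => Fintype.equivFin σ (x j)) ≤ 1 / 10)}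

/-- Exact quantum query complexity. -/
noncomputable def QEquery {V σ : Type} [Fintype V] [DecidableEq V] [Fintype σ] [Nonempty σ]
    (f : (V → σ) → Bool) : ℕ :=
  letI : NeZero (Fintype.card σ) := ⟨Fintype.card_ne_zero⟩
  sInf {t : ℕ | ∃ A : QAlg V (Fintype.card σ), A.queries = t ∧
    ∀ x : V → σ,
      (f x = true → A.acceptProb (fun j => Fintype.equivFin σ (x j)) = 1) ∧
      (f x = false → A.acceptProb (fun j => Fintype.equivFin σ (x j)) = 0)}

/-- Approximate degree of a boolean function. -/
noncomputable def adeg {ι : Type} (F : (ι → Bool) → Bool) : ℕ :=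
  sInf {d : ℕ | ∃ p : MvPolynomial ι ℝ, p.totalDegree ≤ d ∧
    ∀ y : ι → Bool, |MvPolynomial.eval (fun i => if y i then (1 : ℝ) else 0) p -
      (if F y then 1 else 0)| ≤ 1 / 10}
/-! ### The pointer functions of Göös–Pitassi–Watson type -/

/-- A symbol of the input alphabet: a boolean value, a left pointer, a right pointer,
and a back/internal pointer (to a cell or a column, depending on `β`). -/
structure PSym (n m : ℕ) (β : Type) where
  val : Bool
  lp : Option (Fin n × Fin m)
  rp : Option (Fin n × Fin m)
  bp : Option β
deriving DecidableEq

/-- The all-ones symbol `(1,⊥,⊥,⊥)`. -/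
def PSym.one (n m : ℕ) (β : Type) : PSym n m β := ⟨true, none, none, none⟩

/-- The symbol `(0,⊥,⊥,⊥)`. -/
def PSym.zero (n m : ℕ) (β : Type) : PSym n m β := ⟨false, none, none, none⟩

def PSym.equivProd (n m : ℕ) (β : Type) :
    PSym n m β ≃ Bool × Option (Fin n × Fin m) × Option (Fin n × Fin m) × Option β where
  toFun v := (v.val, v.lp, v.rp, v.bp)
  invFun p := ⟨p.1, p.2.1, p.2.2.1, p.2.2.2⟩
  left_inv _ := rfl
  right_inv _ := rfl

instance {n m : ℕ} {β : Type} [Fintype β] : Fintype (PSym n m β) :=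
  Fintype.ofEquiv _ (PSym.equivProd n m β).symm

instance {n m : ℕ} {β : Type} : Nonempty (PSym n m β) := ⟨PSym.one n m β⟩

/-- The sequence of k bits of `j`, most significant first:  the root-to-leaf path
(`false` = left, `true` = right) of the `j`-th leaf in the complete binary tree of depth `k`. -/
def bitsPath (k j : ℕ) : List Bool :=
  ((List.range k).reverse).map fun i => j.testBit i

/-- The root-to-leaf path of the leaf labeled `j` (0-indexed) in the balanced binary tree
with `m` leaves: the complete binary tree if `m` is a power of 2, and otherwise the complete
binary tree on `2 ^ ⌊log₂ m⌋` leaves with a pair of children added to each of the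
`m - 2 ^ ⌊log₂ m⌋` leftmost leaves. -/
def treePath (m j : ℕ) : List Bool :=
  if m - 2 ^ Nat.log 2 m = 0 then bitsPath (Nat.log 2 m) j
  else if j < 2 * (m - 2 ^ Nat.log 2 m) then
    bitsPath (Nat.log 2 m) (j / 2) ++ [j % 2 == 1]
  else bitsPath (Nat.log 2 m) (j - (m - 2 ^ Nat.log 2 m))

/-- Starting at cell `a` and following the left/right pointers of `x` as prescribed by the
list `p` of moves (`false` = left pointer, `true` = right pointer); returns `none` if a
null pointer is encountered. -/
def followPath {n m : ℕ} {β : Type} (x : Fin n × Fin m → PSym n m β)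
    (a : Fin n × Fin m) (p : List Bool) : Option (Fin n × Fin m) :=
  p.foldl (fun acc b => acc.bind fun c => if b then (x c).rp else (x c).lp) (some a)

/-- The conditions for `x` to be a 1-input of `f_{n,m}`, with marked column `b` and special
element `a`: (1) `b` is the unique all-1 column; (2) `a` is the unique cell of column `b`
with `x_a ≠ (1,⊥,⊥,⊥)`; (3) for every column `j ≠ b` the tree path from `a` to the leaf
labeled `j` exists, and ends at a cell `ℓ_j` of column `j` holding a 0; (4) the back pointer
of each `ℓ_j` points to the column `b`. -/
def fCond (n m : ℕ) (x : Fin n × Fin m → PSym n m (Fin m))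
    (b : Fin m) (a : Fin n × Fin m) : Prop :=
  (∀ j : Fin m, (∀ i : Fin n, (x (i, j)).val = true) ↔ j = b) ∧
  a.2 = b ∧
  (∀ i : Fin n, x (i, b) ≠ PSym.one n m (Fin m) ↔ (i, b) = a) ∧
  ∀ j : Fin m, j ≠ b →
    ∃ ℓ : Fin n × Fin m, followPath x a (treePath m j.1) = some ℓ ∧
      ℓ.2 = j ∧ (x ℓ).val = false ∧ (x ℓ).bp = some b

/-- The pointer function `f_{n,m}`, with back pointers to the marked column. -/
noncomputable def fFun (n m : ℕ) (x : Fin n × Fin m → PSym n m (Fin m)) : Bool :=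
  if ∃ b a, fCond n m x b a then true else false

/-- The conditions for `x` to be a 1-input of `g_{n,m}`, with marked column `b` and special
element `a`: (1)–(3) as for `f_{n,m}`, and (4′) the set of columns `j ≠ b` whose highlighted
zero `ℓ_j` has back pointer to `a` has size exactly `m/2`. -/
def gCond (n m : ℕ) (x : Fin n × Fin m → PSym n m (Fin n × Fin m))
    (b : Fin m) (a : Fin n × Fin m) : Prop :=
  (∀ j : Fin m, (∀ i : Fin n, (x (i, j)).val = true) ↔ j = b) ∧
  a.2 = b ∧
  (∀ i : Fin n, x (i, b) ≠ PSym.one n m (Fin n × Fin m) ↔ (i, b) = a) ∧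
  (∀ j : Fin m, j ≠ b →
    ∃ ℓ : Fin n × Fin m, followPath x a (treePath m j.1) = some ℓ ∧
      ℓ.2 = j ∧ (x ℓ).val = false) ∧
  {j : Fin m | j ≠ b ∧ ∃ ℓ : Fin n × Fin m,
      followPath x a (treePath m j.1) = some ℓ ∧ (x ℓ).bp = some a}.ncard = m / 2

/-- The pointer function `g_{n,m}`, where exactly `m/2` of the highlighted zeroes point
back to the special element. -/
noncomputable def gFun (n m : ℕ) (x : Fin n × Fin m → PSym n m (Fin n × Fin m)) : Bool :=
  if ∃ b a, gCond n m x b a then true else false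

/-- Column `j` is good in `x` (for `g_{n,m}`): `x` is a 1-input with marked column `b ≠ j`
and special element `a`, and the highlighted zero of column `j` points back to `a`. -/
def goodColumn (n m : ℕ) (x : Fin n × Fin m → PSym n m (Fin n × Fin m)) (j : Fin m) : Prop :=
  ∃ b a, gCond n m x b a ∧ j ≠ b ∧
    ∃ ℓ : Fin n × Fin m, followPath x a (treePath m j.1) = some ℓ ∧ (x ℓ).bp = some a

/-- The conditions for `x` to be a 1-input of `h_{k,n,m}`, with marked columns `b 0,…,b (k-1)`
and special elements `a 0,…,a (k-1)`: (1) the `b s` are exactly the all-1 columns; (2) `a s` is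
the unique cell of column `b s` with `x_{a s} ≠ (1,⊥,⊥,⊥)`; (3) the internal pointers of the
`a s` form a cycle and all the `a s` have equal left pointers and equal right pointers;
(4) for every non-marked column `j` the tree path from any `a s` to the leaf labeled `j`
exists and ends at a cell `ℓ_j` of column `j` holding a 0. -/
def hCond (k n m : ℕ) (x : Fin n × Fin m → PSym n m (Fin n × Fin m))
    (b : Fin k → Fin m) (a : Fin k → Fin n × Fin m) : Prop :=
  Function.Injective b ∧
  (∀ j : Fin m, (∀ i : Fin n, (x (i, j)).val = true) ↔ ∃ s, b s = j) ∧
  (∀ s, (a s).2 = b s) ∧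
  (∀ s, ∀ i : Fin n, x (i, b s) ≠ PSym.one n m (Fin n × Fin m) ↔ (i, b s) = a s) ∧
  (∀ s : Fin k, (x (a s)).bp = some (a ⟨(s.1 + 1) % k, Nat.mod_lt _ s.pos⟩)) ∧
  (∀ s t : Fin k, (x (a s)).lp = (x (a t)).lp ∧ (x (a s)).rp = (x (a t)).rp) ∧
  ∀ j : Fin m, (∀ s, b s ≠ j) → ∀ s : Fin k,
    ∃ ℓ : Fin n × Fin m, followPath x (a s) (treePath m j.1) = some ℓ ∧
      ℓ.2 = j ∧ (x ℓ).val = false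

/-- The pointer function `h_{k,n,m}` with `k` marked columns and no back pointers. -/
noncomputable def hFun (k n m : ℕ) (x : Fin n × Fin m → PSym n m (Fin n × Fin m)) : Bool :=
  if ∃ b a, hCond k n m x b a then true else false

/-- The hard input `x^ℓ`: cell `(i,j)` holds `(0,⊥,⊥,⊥)` if `i = ℓ j` and `(1,⊥,⊥,⊥)`
otherwise. -/
def xhard (n m : ℕ) (β : Type) (ℓ : Fin m → Fin n) : Fin n × Fin m → PSym n m β :=
  fun c => if c.1 = ℓ c.2 then PSym.zero n m β else PSym.one n m β

/-- The set of (distinct) cells queried among the first `t` queries of `T` on input `x`. -/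
def queriedUpTo {ι σ : Type} [DecidableEq ι] (T : DTree ι σ) (x : ι → σ) (t : ℕ) :
    Finset ι :=
  ((T.queryList x).take t).toFinset
/-! ### The progress measure for the hard distribution `x^ℓ` -/

/-- Column `j` is compromised (for the input `x^ℓ`), given the set `Q` of queried cells:
the zero cell `(ℓ j, j)` has been queried, or more than `n/2` cells of column `j` have been
queried. -/
def compromisedCol (n m : ℕ) (ℓ : Fin m → Fin n) (Q : Finset (Fin n × Fin m))
    (j : Fin m) : Prop :=
  (ℓ j, j) ∈ Q ∨ n < 2 * (Q.filter fun c => c.2 = j).card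

/-- The progress measure `I_t = A_t + (2/n)·B_t` of the decision tree `T` on the input `x^ℓ`
after `t` queries, where `A_t` is the number of compromised columns and `B_t` is the number
of queried cells lying outside compromised columns. -/
noncomputable def Imeasure (n m : ℕ)
    (T : DTree (Fin n × Fin m) (PSym n m (Fin n × Fin m))) (ℓ : Fin m → Fin n) (t : ℕ) : ℝ :=
  ({j : Fin m |
      compromisedCol n m ℓ (queriedUpTo T (xhard n m (Fin n × Fin m) ℓ) t) j}.ncard : ℝ) +
    (2 / n) * ({c : Fin n × Fin m | c ∈ queriedUpTo T (xhard n m (Fin n × Fin m) ℓ) t ∧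
      ¬ compromisedCol n m ℓ (queriedUpTo T (xhard n m (Fin n × Fin m) ℓ) t) c.2}.ncard : ℝ)
/-! ### The balanced binary tree, via root-to-node paths -/

/-- The node set of the balanced binary tree with `m` leaves: each node is identified with
the left/right path from the root to it, so the nodes are exactly the prefixes of the
root-to-leaf paths. -/
def treeNodes (m : ℕ) : Finset (List Bool) :=
  (Finset.range m).biUnion fun j => (treePath m j).inits.toFinset

/-- The leaves of the balanced binary tree with `m` leaves. -/
def leafNodes (m : ℕ) : Finset (List Bool) :=
  (Finset.range m).image fun j => treePath m j

/-- The internal nodes of the balanced binary tree with `m` leaves. -/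
def internalNodes (m : ℕ) : Finset (List Bool) :=
  treeNodes m \ leafNodes m

/-- The subtree rooted at a node `u`: all nodes of which `u` is a prefix. -/
def subtreeOf (m : ℕ) (u : List Bool) : Finset (List Bool) :=
  (treeNodes m).filter fun w => u <+: w

/-! ### The hard distribution for `h_{1,n,m}` -/

/-- A parameter quadruple `(v, π, ℓᴸ, ℓᴺ)` for the hard distribution: a bit `v`, a map `π`
from internal tree nodes to columns, and row maps `ℓᴸ, ℓᴺ` for leaves resp. internal nodes. -/
abbrev HardQ (n m : ℕ) : Type :=
  Bool × ({u : List Bool // u ∈ internalNodes m} → Fin m) × (Fin m → Fin n) × (Fin m → Fin n)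

/-- The valid parameter quadruples: `π` injective and `ℓᴸ j ≠ ℓᴺ j` for all `j`. -/
noncomputable def hardSet (n m : ℕ) : Finset (HardQ n m) :=
  Finset.univ.filter fun q => Function.Injective q.2.1 ∧ ∀ j, q.2.2.1 j ≠ q.2.2.2 j

/-- The column of the root of the tree (`none` if the tree has no internal node). -/
noncomputable def rootCol (n m : ℕ) (q : HardQ n m) : Option (Fin m) :=
  if h : ([] : List Bool) ∈ internalNodes m then some (q.2.1 ⟨[], h⟩) else none

/-- The cell where a child node `w` of an internal node is placed: internal nodes go to
cell `(ℓᴺ (π w), π w)`, the leaf labeled `j` goes to cell `(ℓᴸ j, j)`, and the removed leaf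
(the one labeled by the root's column) yields a null pointer. -/
noncomputable def childCell (n m : ℕ) (q : HardQ n m) (w : List Bool) :
    Option (Fin n × Fin m) :=
  if h : w ∈ internalNodes m then some (q.2.2.2 (q.2.1 ⟨w, h⟩), q.2.1 ⟨w, h⟩)
  else if h2 : ∃ j : Fin m, w = treePath m j.1 ∧ some j ≠ rootCol n m q then
    some (q.2.2.1 (Classical.choose h2), Classical.choose h2)
  else none

/-- The input of the hard distribution determined by the parameter quadruple `q`:
the internal node `u` of the tree is placed at cell `(ℓᴺ (π u), π u)` with left and right
pointers to the cells of its children, value `v` and a self-loop internal pointer if `u` is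
the root, and value 0 otherwise; for `j ≠ π(root)`, the leaf labeled `j` is placed at cell
`(ℓᴸ j, j)` with value 0 and null pointers; all the remaining cells hold `(1,⊥,⊥,⊥)`. -/
noncomputable def hardInput (n m : ℕ) (q : HardQ n m) :
    Fin n × Fin m → PSym n m (Fin n × Fin m) :=
  fun c =>
    if h : ∃ u : {u : List Bool // u ∈ internalNodes m}, q.2.1 u = c.2 ∧ q.2.2.2 c.2 = c.1 then
      { val := if (Classical.choose h).1 = [] then q.1 else false
        lp := childCell n m q ((Classical.choose h).1 ++ [false])
        rp := childCell n m q ((Classical.choose h).1 ++ [true])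
        bp := if (Classical.choose h).1 = [] then some c else none }
    else if some c.2 ≠ rootCol n m q ∧ c.1 = q.2.2.1 c.2 then PSym.zero n m (Fin n × Fin m)
    else PSym.one n m (Fin n × Fin m)

/-- Column `j` directly satisfies (i) or (ii): one of the cells `(ℓᴸ j, j)`, `(ℓᴺ j, j)` has
been queried, or more than half of the cells of column `j` have been queried. -/
def colBad (n m : ℕ) (q : HardQ n m) (Q : Finset (Fin n × Fin m)) (j : Fin m) : Prop :=
  (q.2.2.1 j, j) ∈ Q ∨ (q.2.2.2 j, j) ∈ Q ∨ n < 2 * (Q.filter fun c => c.2 = j).card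

/-- Column `j` is compromised: it satisfies (i) or (ii), or some ancestor `u` of `π⁻¹(j)`
in the tree is such that column `π u` satisfies (i) or (ii). -/
def compromisedCol19 (n m : ℕ) (q : HardQ n m) (Q : Finset (Fin n × Fin m))
    (j : Fin m) : Prop :=
  colBad n m q Q j ∨
  ∃ w u : {u : List Bool // u ∈ internalNodes m}, q.2.1 w = j ∧
    u.1 <+: w.1 ∧ u.1 ≠ w.1 ∧ colBad n m q Q (q.2.1 u)

/-- The progress measure `I_t = min{A_t + (4·C0·log₂ m / n)·B_t, m/2}` of the decision tree
`D` on the hard-distribution input given by `q` after `t` queries, where `A_t` is the number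
of compromised columns and `B_t` the number of queried cells outside compromised columns. -/
noncomputable def Imeasure19 (n m : ℕ) (C0 : ℝ)
    (D : DTree (Fin n × Fin m) (PSym n m (Fin n × Fin m))) (q : HardQ n m) (t : ℕ) : ℝ :=
  min
    (({j : Fin m | compromisedCol19 n m q (queriedUpTo D (hardInput n m q) t) j}.ncard : ℝ) +
      (4 * C0 * Real.logb 2 m / n) *
        ({c : Fin n × Fin m | c ∈ queriedUpTo D (hardInput n m q) t ∧
          ¬ compromisedCol19 n m q (queriedUpTo D (hardInput n m q) t) c.2}.ncard : ℝ))
    (m / 2)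

section Statement7Aux
set_option linter.unusedSectionVars false

namespace DTree

variable {ι σ : Type} [DecidableEq ι]

/-- History of the first `t` queries: the list of (variable, answer) pairs. -/
def hist : DTree ι σ → (ι → σ) → ℕ → List (ι × σ)
  | _, _, 0 => []
  | .leaf _, _, _+1 => []
  | .node v ch, x, t+1 => (v, x v) :: hist (ch (x v)) x t

/-- The subtree reached after `t` steps. -/
def reach : DTree ι σ → (ι → σ) → ℕ → DTree ι σ
  | T, _, 0 => T
  | .leaf b, _, _+1 => .leaf b
  | .node v ch, x, t+1 => reach (ch (x v)) x t

/-- The variable queried at the root, as a finset. -/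
def nextQs : DTree ι σ → Finset ι
  | .leaf _ => ∅
  | .node v _ => {v}

end DTree

open DTree

variable {ι σ : Type} [DecidableEq ι]

lemma queriedUpTo_zero (T : DTree ι σ) (x : ι → σ) : queriedUpTo T x 0 = ∅ := by
  simp [queriedUpTo]

lemma queriedUpTo_leaf (b : Bool) (x : ι → σ) (t : ℕ) :
    queriedUpTo (DTree.leaf b) x t = ∅ := by
  simp [queriedUpTo, DTree.queryList]

lemma queriedUpTo_node (v : ι) (ch : σ → DTree ι σ) (x : ι → σ) (t : ℕ) :
    queriedUpTo (DTree.node v ch) x (t+1) = insert v (queriedUpTo (ch (x v)) x t) := by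
  simp [queriedUpTo, DTree.queryList, List.take_succ_cons]

lemma reach_node (v : ι) (ch : σ → DTree ι σ) (x : ι → σ) (t : ℕ) :
    reach (DTree.node v ch) x (t+1) = reach (ch (x v)) x t := rfl

lemma queriedUpTo_succ (T : DTree ι σ) (x : ι → σ) (t : ℕ) :
    queriedUpTo T x (t+1) = queriedUpTo T x t ∪ nextQs (reach T x t) := by
  induction t generalizing T with
  | zero =>
    cases T with
    | leaf b => simp [queriedUpTo_leaf, reach, nextQs]
    | node v ch => simp [queriedUpTo_node, queriedUpTo_zero, reach, nextQs]
  | succ t ih =>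
    cases T with
    | leaf b => simp [queriedUpTo_leaf, reach, nextQs]
    | node v ch =>
      rw [queriedUpTo_node, queriedUpTo_node, ih (ch (x v)), reach_node,
        Finset.insert_union]

lemma hist_zero (T : DTree ι σ) (x : ι → σ) : DTree.hist T x 0 = [] := by
  cases T <;> rfl

lemma reach_zero (T : DTree ι σ) (x : ι → σ) : reach T x 0 = T := by
  cases T <;> rfl

lemma hist_congr (T : DTree ι σ) (x x' : ι → σ) (t : ℕ)
    (h : ∀ i ∈ queriedUpTo T x t, x i = x' i) :
    DTree.hist T x t = DTree.hist T x' t := by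
  induction t generalizing T with
  | zero => rw [hist_zero, hist_zero]
  | succ t ih =>
    cases T with
    | leaf b => rfl
    | node v ch =>
      have hv : x v = x' v := h v (by rw [queriedUpTo_node]; exact Finset.mem_insert_self _ _)
      show (v, x v) :: DTree.hist (ch (x v)) x t = (v, x' v) :: DTree.hist (ch (x' v)) x' t
      rw [← hv]
      congr 1
      exact ih (ch (x v)) fun i hi =>
        h i (by rw [queriedUpTo_node]; exact Finset.mem_insert_of_mem hi)

lemma reach_congr (T : DTree ι σ) (x x' : ι → σ) (t : ℕ)
    (h : DTree.hist T x t = DTree.hist T x' t) :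
    reach T x t = reach T x' t := by
  induction t generalizing T with
  | zero => rw [reach_zero, reach_zero]
  | succ t ih =>
    cases T with
    | leaf b => rfl
    | node v ch =>
      have h' : (v, x v) :: DTree.hist (ch (x v)) x t
          = (v, x' v) :: DTree.hist (ch (x' v)) x' t := h
      have hv : x v = x' v := by
        have := congrArg (fun l => l.head?) h'
        simpa using this
      have ht : DTree.hist (ch (x v)) x t = DTree.hist (ch (x v)) x' t := by
        have := congrArg (fun l => l.tail) h'
        simpa [← hv] using this
      show reach (ch (x v)) x t = reach (ch (x' v)) x' t
      rw [← hv]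
      exact ih (ch (x v)) ht

lemma queriedUpTo_eq_hist (T : DTree ι σ) (x : ι → σ) (t : ℕ) :
    queriedUpTo T x t = ((DTree.hist T x t).map Prod.fst).toFinset := by
  induction t generalizing T with
  | zero => simp [queriedUpTo_zero, hist_zero]
  | succ t ih =>
    cases T with
    | leaf b => simp [queriedUpTo_leaf, DTree.hist]
    | node v ch =>
      rw [queriedUpTo_node, ih (ch (x v))]
      show _ = (List.map Prod.fst ((v, x v) :: DTree.hist (ch (x v)) x t)).toFinset
      simp

lemma queriedUpTo_congr (T : DTree ι σ) (x x' : ι → σ) (t : ℕ)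
    (h : DTree.hist T x t = DTree.hist T x' t) :
    queriedUpTo T x t = queriedUpTo T x' t := by
  rw [queriedUpTo_eq_hist, queriedUpTo_eq_hist, h]

end Statement7Aux

section Statement7Key
set_option linter.unusedSectionVars false

variable {n m : ℕ}

/-- The value of the progress measure for an abstract query set `Q`. -/
noncomputable def Ival (n m : ℕ) (ℓ : Fin m → Fin n) (Q : Finset (Fin n × Fin m)) : ℝ :=
  ({j : Fin m | compromisedCol n m ℓ Q j}.ncard : ℝ) +
    (2 / n) * ({c : Fin n × Fin m | c ∈ Q ∧ ¬ compromisedCol n m ℓ Q c.2}.ncard : ℝ)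

lemma Imeasure_eq_Ival (n m : ℕ) (T : DTree (Fin n × Fin m) (PSym n m (Fin n × Fin m)))
    (ℓ : Fin m → Fin n) (t : ℕ) :
    Imeasure n m T ℓ t = Ival n m ℓ (queriedUpTo T (xhard n m (Fin n × Fin m) ℓ) t) := rfl

lemma comp_mono {ℓ : Fin m → Fin n} {Q Q' : Finset (Fin n × Fin m)} (hQ : Q ⊆ Q') {j : Fin m}
    (h : compromisedCol n m ℓ Q j) : compromisedCol n m ℓ Q' j := by
  rcases h with h | h
  · exact Or.inl (hQ h)
  · exact Or.inr (h.trans_le (Nat.mul_le_mul_left 2 (Finset.card_le_card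
      (Finset.filter_subset_filter _ hQ))))

lemma comp_insert_ne {ℓ : Fin m → Fin n} {Q : Finset (Fin n × Fin m)} {c : Fin n × Fin m}
    {j : Fin m} (hc : c.2 ≠ j) :
    compromisedCol n m ℓ (insert c Q) j ↔ compromisedCol n m ℓ Q j := by
  unfold compromisedCol
  have h1 : ((ℓ j, j) ∈ insert c Q) ↔ (ℓ j, j) ∈ Q := by
    rw [Finset.mem_insert]
    simp only [or_iff_right_iff_imp]
    intro h
    exact absurd (congrArg Prod.snd h).symm hc
  have h2 : ((insert c Q).filter fun c' => c'.2 = j) = Q.filter fun c' => c'.2 = j := by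
    rw [Finset.filter_insert, if_neg hc]
  rw [h1, h2]

lemma Ival_insert_diff_le (hn : 2 ≤ n) (ℓ : Fin m → Fin n) (Q : Finset (Fin n × Fin m))
    (i₀ : Fin n) (j₀ : Fin m) :
    Ival n m ℓ (insert (i₀, j₀) Q) - Ival n m ℓ Q ≤
      if ¬ compromisedCol n m ℓ Q j₀ ∧ ℓ j₀ = i₀ then (1:ℝ) else 2 / (n:ℝ) := by
  classical
  have hn0 : (0:ℝ) < n := by
    have : 0 < n := by omega
    exact_mod_cast this
  set Q' := insert (i₀, j₀) Q with hQ'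
  by_cases hc : compromisedCol n m ℓ Q j₀
  · -- the column was already compromised: nothing changes
    have hcs : ∀ j, compromisedCol n m ℓ Q' j ↔ compromisedCol n m ℓ Q j := by
      intro j
      by_cases hj : j = j₀
      · subst hj; exact ⟨fun _ => hc, fun _ => comp_mono (Finset.subset_insert _ _) hc⟩
      · exact comp_insert_ne (Ne.symm hj)
    have hA : {j : Fin m | compromisedCol n m ℓ Q' j} = {j | compromisedCol n m ℓ Q j} :=
      Set.ext fun j => hcs j
    have hB : {c : Fin n × Fin m | c ∈ Q' ∧ ¬ compromisedCol n m ℓ Q' c.2}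
        = {c : Fin n × Fin m | c ∈ Q ∧ ¬ compromisedCol n m ℓ Q c.2} := by
      ext c
      simp only [Set.mem_setOf_eq, hcs, hQ', Finset.mem_insert]
      constructor
      · rintro ⟨h1 | h1, h2⟩
        · rw [h1] at h2; exact absurd hc (fun h => h2 ((hcs _).mpr h))
        · exact ⟨h1, fun h => h2 ((hcs _).mpr h)⟩
      · rintro ⟨h1, h2⟩; exact ⟨Or.inr h1, fun h => h2 ((hcs _).mp h)⟩
    have heq : Ival n m ℓ Q' = Ival n m ℓ Q := by rw [Ival, Ival, hA, hB]
    rw [heq, sub_self]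
    split_ifs
    · norm_num
    · positivity
  · by_cases hc' : compromisedCol n m ℓ Q' j₀
    · -- the column becomes newly compromised
      have hj₀notin : (ℓ j₀, j₀) ∉ Q := fun h => hc (Or.inl h)
      have hcount : 2 * (Q.filter fun c => c.2 = j₀).card ≤ n := by
        by_contra h
        exact hc (Or.inr (by omega))
      have hcs : ∀ j, j ≠ j₀ → (compromisedCol n m ℓ Q' j ↔ compromisedCol n m ℓ Q j) :=
        fun j hj => comp_insert_ne (Ne.symm hj)
      have hA : {j : Fin m | compromisedCol n m ℓ Q' j}
          = insert j₀ {j : Fin m | compromisedCol n m ℓ Q j} := by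
        ext j
        by_cases hj : j = j₀
        · subst hj; simp [hc']
        · simp [Set.mem_insert_iff, hj, hcs j hj]
      have hAcard0 : {j : Fin m | compromisedCol n m ℓ Q' j}.ncard
          = {j : Fin m | compromisedCol n m ℓ Q j}.ncard + 1 := by
        rw [hA]
        exact Set.ncard_insert_of_notMem hc (Set.toFinite _)
      have hAcard : ({j : Fin m | compromisedCol n m ℓ Q' j}.ncard : ℝ)
          = ({j : Fin m | compromisedCol n m ℓ Q j}.ncard : ℝ) + 1 := by
        rw [hAcard0]; push_cast; ring
      set BS := {c : Fin n × Fin m | c ∈ Q ∧ ¬ compromisedCol n m ℓ Q c.2} with hBS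
      set colS := {c : Fin n × Fin m | c.2 = j₀} with hcolS
      have hB : {c : Fin n × Fin m | c ∈ Q' ∧ ¬ compromisedCol n m ℓ Q' c.2} = BS \ colS := by
        ext c
        simp only [Set.mem_setOf_eq, Set.mem_diff, hBS, hcolS]
        by_cases hcj : c.2 = j₀
        · constructor
          · rintro ⟨h1, h2⟩
            exact absurd (by rw [hcj]; exact hc') h2
          · rintro ⟨h1, h2⟩
            exact absurd hcj h2
        · have hne : c ≠ (i₀, j₀) := fun h => hcj (congrArg Prod.snd h)
          constructor
          · rintro ⟨h1, h2⟩
            rw [hQ', Finset.mem_insert] at h1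
            rcases h1 with h1 | h1
            · exact absurd h1 hne
            · exact ⟨⟨h1, fun h => h2 ((hcs c.2 hcj).mpr h)⟩, hcj⟩
          · rintro ⟨⟨h1, h2⟩, _⟩
            exact ⟨by rw [hQ', Finset.mem_insert]; exact Or.inr h1,
              fun h => h2 ((hcs c.2 hcj).mp h)⟩
      have hI : BS ∩ colS = ↑(Q.filter fun c => c.2 = j₀) := by
        ext c
        simp only [Set.mem_inter_iff, hBS, hcolS, Set.mem_setOf_eq, Finset.coe_filter]
        constructor
        · rintro ⟨⟨h1, _⟩, h2⟩; exact ⟨h1, h2⟩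
        · rintro ⟨h1, h2⟩
          exact ⟨⟨h1, by rw [h2]; exact hc⟩, h2⟩
      set k := (Q.filter fun c => c.2 = j₀).card with hk
      have hsub : BS ∩ colS ⊆ BS := Set.inter_subset_left
      have hBdiff : BS \ colS = BS \ (BS ∩ colS) := by
        ext c
        simp only [Set.mem_diff, Set.mem_inter_iff]
        tauto
      have hkcard : (BS ∩ colS).ncard = k := by rw [hI, Set.ncard_coe_finset]
      have hBcard : (((BS \ colS).ncard : ℕ) : ℝ) = (BS.ncard : ℝ) - k := by
        rw [hBdiff, Set.cast_ncard_sdiff hsub (Set.toFinite _), hkcard]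
      have hdiff : Ival n m ℓ Q' - Ival n m ℓ Q = 1 - 2 / n * k := by
        rw [Ival, Ival, hAcard, hB, hBcard, hBS]
        ring
      rw [hdiff]
      by_cases hbad : ℓ j₀ = i₀
      · rw [if_pos ⟨hc, hbad⟩]
        have h0 : (0:ℝ) ≤ 2 / n * k := by positivity
        linarith
      · rw [if_neg (fun h => hbad h.2)]
        have hmem : (ℓ j₀, j₀) ∉ Q' := by
          rw [hQ', Finset.mem_insert]
          rintro (h | h)
          · exact hbad (congrArg Prod.fst h)
          · exact hj₀notin h
        have hcnt' : n < 2 * (Q'.filter fun c => c.2 = j₀).card := hc'.resolve_left hmem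
        have hfil : (Q'.filter fun c => c.2 = j₀)
            = insert (i₀, j₀) (Q.filter fun c => c.2 = j₀) := by
          rw [hQ', Finset.filter_insert, if_pos rfl]
        have hle : (Q'.filter fun c => c.2 = j₀).card ≤ k + 1 := by
          rw [hfil]; exact Finset.card_insert_le _ _
        have hnk : (n:ℝ) ≤ 2 * k + 1 := by
          have : n ≤ 2 * k + 1 := by omega
          exact_mod_cast this
        have heq2 : (1:ℝ) - 2 / n * k = ((n:ℝ) - 2 * k) / n := by
          field_simp
        rw [heq2]
        have h2 : (n:ℝ) - 2 * k ≤ 2 := by linarith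
        rw [div_le_div_iff₀ hn0 hn0]
        nlinarith
    · -- the column stays non-compromised
      have hcs : ∀ j, compromisedCol n m ℓ Q' j ↔ compromisedCol n m ℓ Q j := by
        intro j
        by_cases hj : j = j₀
        · subst hj; exact ⟨fun h => absurd h hc', fun h => absurd h hc⟩
        · exact comp_insert_ne (Ne.symm hj)
      have hA : {j : Fin m | compromisedCol n m ℓ Q' j} = {j | compromisedCol n m ℓ Q j} :=
        Set.ext fun j => hcs j
      have hBsub : {c : Fin n × Fin m | c ∈ Q' ∧ ¬ compromisedCol n m ℓ Q' c.2}
          ⊆ insert (i₀, j₀) {c : Fin n × Fin m | c ∈ Q ∧ ¬ compromisedCol n m ℓ Q c.2} := by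
        rintro c ⟨h1, h2⟩
        rw [hQ', Finset.mem_insert] at h1
        simp only [Set.mem_insert_iff, Set.mem_setOf_eq]
        rcases h1 with h1 | h1
        · exact Or.inl h1
        · exact Or.inr ⟨h1, fun h => h2 ((hcs c.2).mpr h)⟩
      have hBle : ({c : Fin n × Fin m | c ∈ Q' ∧ ¬ compromisedCol n m ℓ Q' c.2}.ncard : ℝ)
          ≤ ({c : Fin n × Fin m | c ∈ Q ∧ ¬ compromisedCol n m ℓ Q c.2}.ncard : ℝ) + 1 := by
        have h1 := Set.ncard_le_ncard hBsub (Set.toFinite _)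
        have h2 := Set.ncard_insert_le (i₀, j₀)
          {c : Fin n × Fin m | c ∈ Q ∧ ¬ compromisedCol n m ℓ Q c.2}
        have := le_trans h1 h2
        push_cast
        exact_mod_cast this
      have hfin : Ival n m ℓ Q' - Ival n m ℓ Q ≤ 2 / n := by
        rw [Ival, Ival, hA]
        have h20 : (0:ℝ) ≤ 2 / n := by positivity
        nlinarith [hBle]
      split_ifs with h
      · have h21 : (2:ℝ) / n ≤ 1 := by
          rw [div_le_one hn0]
          exact_mod_cast hn
        linarith
      · exact hfin

end Statement7Key

section Statement7Main
set_option linter.unusedSectionVars false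
open DTree

variable {n m : ℕ}

/-- Counting lemma: within a fiber of the history map, the proportion of `ℓ` that are about
to have the zero cell of column `j₀` hit is at most `2/n`. -/
lemma bad_card_le (hn : 2 ≤ n) (T : DTree (Fin n × Fin m) (PSym n m (Fin n × Fin m))) (t : ℕ)
    (h : List ((Fin n × Fin m) × PSym n m (Fin n × Fin m)))
    (Q : Finset (Fin n × Fin m)) (i₀ : Fin n) (j₀ : Fin m)
    (hQall : ∀ ℓ : Fin m → Fin n, DTree.hist T (xhard n m (Fin n × Fin m) ℓ) t = h →
      queriedUpTo T (xhard n m (Fin n × Fin m) ℓ) t = Q) :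
    n * (Finset.univ.filter fun ℓ : Fin m → Fin n =>
        (DTree.hist T (xhard n m (Fin n × Fin m) ℓ) t = h) ∧
        ¬ compromisedCol n m ℓ Q j₀ ∧ ℓ j₀ = i₀).card
      ≤ 2 * (Finset.univ.filter fun ℓ : Fin m → Fin n =>
        DTree.hist T (xhard n m (Fin n × Fin m) ℓ) t = h).card := by
  classical
  set xh := fun ℓ : Fin m → Fin n => xhard n m (Fin n × Fin m) ℓ with hxh
  set F := Finset.univ.filter (fun ℓ : Fin m → Fin n => DTree.hist T (xh ℓ) t = h) with hF
  set B := Finset.univ.filter (fun ℓ : Fin m → Fin n =>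
      (DTree.hist T (xh ℓ) t = h) ∧ ¬ compromisedCol n m ℓ Q j₀ ∧ ℓ j₀ = i₀) with hB
  show n * B.card ≤ 2 * F.card
  rcases B.eq_empty_or_nonempty with hBe | ⟨ℓb, hℓb⟩
  · rw [hBe]; simp
  · rw [hB, Finset.mem_filter] at hℓb
    obtain ⟨-, hbh, hbc, hbi⟩ := hℓb
    set k := (Q.filter fun c => c.2 = j₀).card with hk
    have hcount : 2 * k ≤ n := by
      by_contra hcon
      exact hbc (Or.inr (by omega))
    have hi₀Q : (i₀, j₀) ∉ Q := by
      intro hmem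
      exact hbc (Or.inl (by rw [hbi]; exact hmem))
    set R := Finset.univ.filter (fun i : Fin n => (i, j₀) ∉ Q) with hR
    have hcardR : R.card = n - k := by
      have himg : (Finset.univ.filter fun i : Fin n => (i, j₀) ∈ Q).image (fun i => (i, j₀))
          = Q.filter fun c => c.2 = j₀ := by
        ext c
        simp only [Finset.mem_image, Finset.mem_filter, Finset.mem_univ, true_and]
        constructor
        · rintro ⟨i, hi, rfl⟩; exact ⟨hi, rfl⟩
        · rintro ⟨hc1, hc2⟩
          exact ⟨c.1, by rw [← hc2]; exact hc1, by rw [← hc2]⟩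
      have hinj : Function.Injective (fun i : Fin n => (i, j₀)) :=
        fun a b hab => congrArg Prod.fst hab
      have h1 : (Finset.univ.filter fun i : Fin n => (i, j₀) ∈ Q).card = k := by
        rw [← Finset.card_image_of_injective _ hinj, himg]
      have h2 := Finset.card_filter_add_card_filter_not
        (s := (Finset.univ : Finset (Fin n))) (p := fun i : Fin n => (i, j₀) ∈ Q)
      rw [Finset.card_univ, Fintype.card_fin] at h2
      have h3 : R.card = (Finset.univ.filter fun i : Fin n => ¬ (i, j₀) ∈ Q).card := rfl
      omega
    have hmaps : ∀ p ∈ B ×ˢ R, Function.update p.1 j₀ p.2 ∈ F := by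
      rintro ⟨ℓ, i⟩ hp
      rw [Finset.mem_product] at hp
      obtain ⟨hpB, hpR⟩ := hp
      rw [hB, Finset.mem_filter] at hpB
      obtain ⟨-, hℓh, hℓc, hℓi⟩ := hpB
      rw [hR, Finset.mem_filter] at hpR
      have hiQ : (i, j₀) ∉ Q := hpR.2
      have hQl : queriedUpTo T (xh ℓ) t = Q := hQall ℓ hℓh
      have hagree : ∀ c ∈ queriedUpTo T (xh ℓ) t, xh ℓ c = xh (Function.update ℓ j₀ i) c := by
        intro c hcQ
        rw [hQl] at hcQ
        by_cases hcj : c.2 = j₀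
        · have hc1i₀ : c.1 ≠ i₀ := by
            intro he
            apply hi₀Q
            have : c = (i₀, j₀) := Prod.ext he hcj
            rwa [this] at hcQ
          have hc1i : c.1 ≠ i := by
            intro he
            apply hiQ
            have : c = (i, j₀) := Prod.ext he hcj
            rwa [this] at hcQ
          show xhard n m (Fin n × Fin m) ℓ c = xhard n m (Fin n × Fin m) (Function.update ℓ j₀ i) c
          unfold xhard
          rw [if_neg (by rw [hcj, show ℓ j₀ = i₀ from hℓi]; exact hc1i₀),
            if_neg (by rw [hcj, Function.update_self]; exact hc1i)]
        · show xhard n m (Fin n × Fin m) ℓ c = xhard n m (Fin n × Fin m) (Function.update ℓ j₀ i) c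
          unfold xhard
          rw [Function.update_of_ne hcj]
      have hh' : DTree.hist T (xh (Function.update ℓ j₀ i)) t = h := by
        rw [← hist_congr T (xh ℓ) (xh (Function.update ℓ j₀ i)) t hagree]
        exact hℓh
      rw [hF, Finset.mem_filter]
      exact ⟨Finset.mem_univ _, hh'⟩
    have hinj2 : Set.InjOn (fun p : (Fin m → Fin n) × Fin n => Function.update p.1 j₀ p.2)
        ↑(B ×ˢ R) := by
      rintro ⟨ℓ, i⟩ hp ⟨ℓ', i'⟩ hp' heq
      simp only [Finset.coe_product, Set.mem_prod, Finset.mem_coe] at hp hp'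
      have hℓi : ℓ j₀ = i₀ := by
        have := hp.1; rw [hB, Finset.mem_filter] at this; exact this.2.2.2
      have hℓi' : ℓ' j₀ = i₀ := by
        have := hp'.1; rw [hB, Finset.mem_filter] at this; exact this.2.2.2
      have h2 : i = i' := by
        have := congrFun heq j₀
        simpa [Function.update_self] using this
      have h1 : ℓ = ℓ' := by
        funext j
        by_cases hj : j = j₀
        · subst hj; rw [hℓi, hℓi']
        · have := congrFun heq j
          simpa [Function.update_of_ne hj] using this
      simp [h1, h2]
    have hcard := Finset.card_le_card_of_injOn _ hmaps hinj2
    rw [Finset.card_product] at hcard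
    have hR2 : n ≤ 2 * (n - k) := by omega
    calc n * B.card ≤ (2 * (n - k)) * B.card := Nat.mul_le_mul_right _ hR2
      _ = 2 * (B.card * R.card) := by rw [hcardR]; ring
      _ ≤ 2 * F.card := Nat.mul_le_mul_left _ hcard

/-- Per-fiber bound on the expected increase of the progress measure. -/
lemma fiber_sum_le (hn : 2 ≤ n) (T : DTree (Fin n × Fin m) (PSym n m (Fin n × Fin m))) (t : ℕ)
    (h : List ((Fin n × Fin m) × PSym n m (Fin n × Fin m))) :
    ∑ ℓ ∈ Finset.univ.filter (fun ℓ : Fin m → Fin n =>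
        DTree.hist T (xhard n m (Fin n × Fin m) ℓ) t = h),
      (Imeasure n m T ℓ (t+1) - Imeasure n m T ℓ t)
    ≤ (4 / n) * (Finset.univ.filter (fun ℓ : Fin m → Fin n =>
        DTree.hist T (xhard n m (Fin n × Fin m) ℓ) t = h)).card := by
  classical
  have hn0 : (0:ℝ) < n := by exact_mod_cast (by omega : 0 < n)
  set xh := fun ℓ : Fin m → Fin n => xhard n m (Fin n × Fin m) ℓ with hxh
  set F := Finset.univ.filter (fun ℓ : Fin m → Fin n => DTree.hist T (xh ℓ) t = h) with hF
  rcases F.eq_empty_or_nonempty with hFe | ⟨ℓ₀, hℓ₀⟩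
  · rw [hFe]; simp
  · have hℓ₀h : DTree.hist T (xh ℓ₀) t = h := (Finset.mem_filter.mp hℓ₀).2
    set Q := queriedUpTo T (xh ℓ₀) t with hQ
    have hQall : ∀ ℓ, DTree.hist T (xh ℓ) t = h → queriedUpTo T (xh ℓ) t = Q :=
      fun ℓ hℓ => queriedUpTo_congr T (xh ℓ) (xh ℓ₀) t (hℓ.trans hℓ₀h.symm)
    have hreach : ∀ ℓ, DTree.hist T (xh ℓ) t = h → reach T (xh ℓ) t = reach T (xh ℓ₀) t :=
      fun ℓ hℓ => reach_congr _ _ _ _ (hℓ.trans hℓ₀h.symm)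
    cases hr : reach T (xh ℓ₀) t with
    | leaf b =>
      have hzero : ∀ ℓ ∈ F, Imeasure n m T ℓ (t+1) - Imeasure n m T ℓ t = 0 := by
        intro ℓ hℓ
        have hℓh := (Finset.mem_filter.mp hℓ).2
        have hq : queriedUpTo T (xh ℓ) (t+1) = queriedUpTo T (xh ℓ) t := by
          rw [queriedUpTo_succ, hreach ℓ hℓh, hr]
          simp [DTree.nextQs]
        rw [Imeasure_eq_Ival, Imeasure_eq_Ival]
        show Ival n m ℓ (queriedUpTo T (xh ℓ) (t+1)) - Ival n m ℓ (queriedUpTo T (xh ℓ) t) = 0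
        rw [hq, sub_self]
      rw [Finset.sum_congr rfl hzero, Finset.sum_const, smul_zero]
      positivity
    | node c ch =>
      obtain ⟨i₀, j₀⟩ := c
      have hpoint : ∀ ℓ ∈ F, Imeasure n m T ℓ (t+1) - Imeasure n m T ℓ t ≤
          (if ¬ compromisedCol n m ℓ Q j₀ ∧ ℓ j₀ = i₀ then (1:ℝ) else 2 / n) := by
        intro ℓ hℓ
        have hℓh := (Finset.mem_filter.mp hℓ).2
        have hQl := hQall ℓ hℓh
        have hstep : queriedUpTo T (xh ℓ) (t+1) = insert (i₀, j₀) Q := by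
          rw [queriedUpTo_succ, hreach ℓ hℓh, hr, hQl]
          show Q ∪ {(i₀, j₀)} = insert (i₀, j₀) Q
          rw [Finset.union_comm, Finset.insert_eq]
        rw [Imeasure_eq_Ival, Imeasure_eq_Ival]
        show Ival n m ℓ (queriedUpTo T (xh ℓ) (t+1)) - Ival n m ℓ (queriedUpTo T (xh ℓ) t) ≤ _
        rw [hstep, hQl]
        exact Ival_insert_diff_le hn ℓ Q i₀ j₀
      set B := F.filter (fun ℓ => ¬ compromisedCol n m ℓ Q j₀ ∧ ℓ j₀ = i₀) with hBdef
      have hBeq : B = Finset.univ.filter (fun ℓ : Fin m → Fin n =>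
          (DTree.hist T (xh ℓ) t = h) ∧ ¬ compromisedCol n m ℓ Q j₀ ∧ ℓ j₀ = i₀) := by
        rw [hBdef, hF, Finset.filter_filter]
      have hbad := bad_card_le hn T t h Q i₀ j₀ hQall
      have hBcast : (n:ℝ) * B.card ≤ 2 * F.card := by
        rw [hBeq]
        exact_mod_cast hbad
      have hsum1 : ∑ ℓ ∈ F, (Imeasure n m T ℓ (t+1) - Imeasure n m T ℓ t)
          ≤ ∑ ℓ ∈ F, (if ¬ compromisedCol n m ℓ Q j₀ ∧ ℓ j₀ = i₀ then (1:ℝ) else 2 / n) :=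
        Finset.sum_le_sum hpoint
      have hsum2 : ∑ ℓ ∈ F, (if ¬ compromisedCol n m ℓ Q j₀ ∧ ℓ j₀ = i₀ then (1:ℝ) else 2 / n)
          ≤ (B.card : ℝ) + (2/n) * F.card := by
        rw [Finset.sum_ite, Finset.sum_const, Finset.sum_const, nsmul_eq_mul, nsmul_eq_mul,
          mul_one]
        have hle1 : ((F.filter fun ℓ => ¬(¬ compromisedCol n m ℓ Q j₀ ∧ ℓ j₀ = i₀)).card : ℝ)
            ≤ (F.card : ℝ) := by
          exact_mod_cast Finset.card_filter_le _ _
        have h20 : (0:ℝ) ≤ 2 / n := by positivity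
        nlinarith [hle1, h20]
      have hBle : (B.card : ℝ) ≤ 2 / n * F.card := by
        rw [div_mul_eq_mul_div, le_div_iff₀ hn0, mul_comm]
        linarith [hBcast]
      calc ∑ ℓ ∈ F, (Imeasure n m T ℓ (t+1) - Imeasure n m T ℓ t)
          ≤ (B.card : ℝ) + (2/n) * F.card := hsum1.trans hsum2
        _ ≤ (2/n) * F.card + (2/n) * F.card := by linarith
        _ = (4/n) * F.card := by ring

end Statement7Main
/-- The progress measure `I_t = A_t + (2/n)·B_t` grows, in expectation over
the hard distribution, by at most `4/n` per query. -/
theorem statement7 (n m : ℕ) (hn : 2 ≤ n) (hm : 2 ≤ m)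
    (T : DTree (Fin n × Fin m) (PSym n m (Fin n × Fin m))) (t : ℕ) :
    (∑ ℓ : Fin m → Fin n, Imeasure n m T ℓ (t + 1)) / (Fintype.card (Fin m → Fin n) : ℝ) -
      (∑ ℓ : Fin m → Fin n, Imeasure n m T ℓ t) / (Fintype.card (Fin m → Fin n) : ℝ) ≤
      4 / n := by
  classical
  have hn0 : (0:ℝ) < n := by exact_mod_cast (by omega : 0 < n)
  have hNpos : 0 < Fintype.card (Fin m → Fin n) :=
    Fintype.card_pos_iff.mpr ⟨fun _ => ⟨0, by omega⟩⟩
  have hN0 : (0:ℝ) < (Fintype.card (Fin m → Fin n) : ℝ) := by exact_mod_cast hNpos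
  rw [div_sub_div_same, ← Finset.sum_sub_distrib, div_le_iff₀ hN0]
  have hmaps : ∀ ℓ : Fin m → Fin n, ℓ ∈ Finset.univ →
      (DTree.hist T (xhard n m (Fin n × Fin m) ℓ) t) ∈
        Finset.univ.image (fun ℓ : Fin m → Fin n =>
          DTree.hist T (xhard n m (Fin n × Fin m) ℓ) t) :=
    fun ℓ _ => Finset.mem_image_of_mem _ (Finset.mem_univ ℓ)
  rw [← Finset.sum_fiberwise_of_maps_to hmaps
    (fun ℓ => Imeasure n m T ℓ (t+1) - Imeasure n m T ℓ t)]
  have hcards := Finset.card_eq_sum_card_fiberwise hmaps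
  calc ∑ h ∈ Finset.univ.image (fun ℓ : Fin m → Fin n =>
          DTree.hist T (xhard n m (Fin n × Fin m) ℓ) t),
        ∑ ℓ ∈ Finset.univ.filter (fun ℓ : Fin m → Fin n =>
          DTree.hist T (xhard n m (Fin n × Fin m) ℓ) t = h),
        (Imeasure n m T ℓ (t+1) - Imeasure n m T ℓ t)
      ≤ ∑ h ∈ Finset.univ.image (fun ℓ : Fin m → Fin n =>
          DTree.hist T (xhard n m (Fin n × Fin m) ℓ) t),
        (4 / (n:ℝ)) * (Finset.univ.filter (fun ℓ : Fin m → Fin n =>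
          DTree.hist T (xhard n m (Fin n × Fin m) ℓ) t = h)).card :=
        Finset.sum_le_sum (fun h _ => fiber_sum_le hn T t h)
    _ = (4 / (n:ℝ)) * ∑ h ∈ Finset.univ.image (fun ℓ : Fin m → Fin n =>
          DTree.hist T (xhard n m (Fin n × Fin m) ℓ) t),
        ((Finset.univ.filter (fun ℓ : Fin m → Fin n =>
          DTree.hist T (xhard n m (Fin n × Fin m) ℓ) t = h)).card : ℝ) := by
        rw [Finset.mul_sum]
    _ = 4 / (n:ℝ) * (Fintype.card (Fin m → Fin n) : ℝ) := by
        congr 1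
        rw [← Finset.card_univ]
        exact_mod_cast hcards.symm
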